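/- Let G be a finite connected multigraph with spanning tree T0 whose tree edges are directed and labeled f_1,…,f_M. Then the entries of the mesh Laplacian Δ(G,T0) = Y·Yᵀ are: the diagonal entry at (f_k,f_k) equals the number of edges e ∈ E(G)−E(T0) such that f_k lies in the support of D(e); and for k ≠ l, the entry at (f_k,f_l) equals Sign(k,l) times the number of edges e ∈ E(G)−E(T0) such that both f_k and f_l lie in the support of D(e), where Sign(k,l) = ⟨f_k, γ⃗⟩·⟨f_l, γ⃗⟩ ∈ {±1} for γ⃗ the unique directed simple path in T0 from the edge f_k to the edge f_l. -/

import Mathlib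

open scoped Classical
open Polynomial BigOperators Matrix

namespace Mesh

variable {V E : Type}

/-- One undirected step between vertices along an edge in `S`. -/
def Step (src tgt : E → V) (S : Finset E) (a b : V) : Prop :=
  ∃ e ∈ S, (src e = a ∧ tgt e = b) ∨ (src e = b ∧ tgt e = a)

/-- Reachability within the subgraph with edge set `S`. -/
def Reach (src tgt : E → V) (S : Finset E) (a b : V) : Prop :=
  Relation.EqvGen (Step src tgt S) a b

/-- The spanning subgraph with edge set `S` is connected. -/
def ConnectedVia (src tgt : E → V) (S : Finset E) : Prop :=
  ∀ a b : V, Reach src tgt S a b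

/-- `S` is the edge set of a spanning tree: connected and `|V| - 1` edges. -/
def IsSpanningTree [Fintype V] (src tgt : E → V) (S : Finset E) : Prop :=
  ConnectedVia src tgt S ∧ S.card + 1 = Fintype.card V

/-- Number of spanning trees of the multigraph `(V, E, src, tgt)`. -/
noncomputable def ST [Fintype V] (src tgt : E → V) : ℕ :=
  Nat.card {S : Finset E // IsSpanningTree src tgt S}

/-- `ST_j(G, T0)`: number of spanning trees having exactly `j` edges outside `T0`. -/
noncomputable def STj [Fintype V] [DecidableEq E] (src tgt : E → V) (T0 : Finset E) (j : ℕ) : ℕ :=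
  Nat.card {S : Finset E // IsSpanningTree src tgt S ∧ (S \ T0).card = j}

/-- Boundary of an integral 1-chain. -/
def bdry [Fintype E] [DecidableEq V] (src tgt : E → V) (c : E → ℤ) : V → ℤ :=
  fun v => ∑ e, c e * ((if tgt e = v then 1 else 0) - (if src e = v then 1 else 0))

/-- The fundamental cycle `Z[j] = e_j + D(e_j)`. -/
def Zchain [DecidableEq E] (T0 : Finset E) (D : {e : E // e ∉ T0} → E → ℤ)
    (j : {e : E // e ∉ T0}) : E → ℤ :=
  fun e => (if e = (j : E) then 1 else 0) + D j e

/-- `D` assigns to each non-tree edge the (unique) chain supported in the tree `T0`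
making `Z[j] = e_j + D(e_j)` a cycle; for a spanning tree this characterizes the
signed sum of edges of the tree path from the head to the tail of `e_j`. -/
def IsPathData [Fintype V] [Fintype E] [DecidableEq V] [DecidableEq E]
    (src tgt : E → V) (T0 : Finset E) (D : {e : E // e ∉ T0} → E → ℤ) : Prop :=
  (∀ j f, D j f ≠ 0 → f ∈ T0) ∧ ∀ j, bdry src tgt (Zchain T0 D j) = 0

/-- The mesh matrix `Mesh(G,T0)` with entries `⟨Z[j₁], Z[j₂]⟩`. -/
noncomputable def MeshM [Fintype E] [DecidableEq E] (T0 : Finset E)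
    (D : {e : E // e ∉ T0} → E → ℤ) :
    Matrix {e : E // e ∉ T0} {e : E // e ∉ T0} ℤ :=
  Matrix.of fun j₁ j₂ => ∑ e, Zchain T0 D j₁ e * Zchain T0 D j₂ e

/-- The matrix `Y` of the map `D` in the edge bases. -/
noncomputable def Ymat [DecidableEq E] (T0 : Finset E) (D : {e : E // e ∉ T0} → E → ℤ) :
    Matrix {f : E // f ∈ T0} {e : E // e ∉ T0} ℤ :=
  Matrix.of fun k j => D j (k : E)

/-- The Kirchhoff Laplacian `Deg - Adj` of a multigraph. -/
noncomputable def LapDegAdj {V' E' : Type} [Fintype E'] [DecidableEq V'] (s t : E' → V') :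
    Matrix V' V' ℤ :=
  Matrix.of fun a b =>
    (if a = b then
        ((Finset.univ.filter fun e => s e = a).card + (Finset.univ.filter fun e => t e = a).card : ℤ)
      else 0)
    - ((Finset.univ.filter fun e => (s e = a ∧ t e = b) ∨ (s e = b ∧ t e = a)).card : ℤ)

/-- The incidence coefficient of vertex `v` in `∂e`. -/
def inc [DecidableEq V] (src tgt : E → V) (e : E) (v : V) : ℤ :=
  (if tgt e = v then 1 else 0) - (if src e = v then 1 else 0)

/-- Source map of the cone `C'(H)`: vertices `Option V` (with `none = W`),
edges `E ⊕ V` (`inl` the edges of `H`, `inr P` the cone edge `P → W`). -/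
def coneSrc (src : E → V) : E ⊕ V → Option V
  | Sum.inl e => some (src e)
  | Sum.inr p => some p

/-- Target map of the cone `C'(H)`. -/
def coneTgt (tgt : E → V) : E ⊕ V → Option V
  | Sum.inl e => some (tgt e)
  | Sum.inr _ => none

/-- The edge set of the cone subgraph `C(V(H))` of `C'(H)`. -/
noncomputable def coneTree (E V : Type) [Fintype E] [Fintype V] : Finset (E ⊕ V) :=
  Finset.univ.filter fun x => x.isRight = true

/-- The tree chain `D(e) = (Q → W) - (P → W)` for the pair `(C'(H), C(V(H)))`. -/
def coneD [DecidableEq V] [DecidableEq E] (src tgt : E → V) (e : E) : E ⊕ V → ℤ :=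
  fun x => (if x = Sum.inr (tgt e) then 1 else 0) - (if x = Sum.inr (src e) then 1 else 0)

/-- The boundary map as a homomorphism of abelian groups. -/
noncomputable def bdryHom [Fintype E] [DecidableEq V] (src tgt : E → V) :
    (E → ℤ) →+ (V → ℤ) where
  toFun := bdry src tgt
  map_zero' := by funext v; simp [bdry]
  map_add' := by
    intro a b
    funext v
    simp [bdry, add_mul, Finset.sum_add_distrib]

/-- `Π ∘ ∂*` : the composition of the coboundary with the identification `Π`. -/
noncomputable def cobdryHom (src tgt : E → V) : (V → ℤ) →+ (E → ℤ) where
  toFun := fun g e => g (tgt e) - g (src e)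
  map_zero' := by funext e; simp
  map_add' := by
    intro a b
    funext e
    simp only [Pi.add_apply]
    ring

/-- The reachability setoid of the spanning subgraph with edge set `F`. -/
def reachSetoid (src tgt : E → V) (F : Finset E) : Setoid V :=
  ⟨Relation.EqvGen (Step src tgt F), Relation.EqvGen.is_equivalence _⟩

/-- Number of connected components of the spanning subgraph with edge set `F`. -/
noncomputable def ncomp (src tgt : E → V) (F : Finset E) : ℕ :=
  Nat.card (Quotient (reachSetoid src tgt F))

/-- `F` is (the edge set of) a spanning forest. -/
def IsSpForest [Fintype V] (src tgt : E → V) (F : Finset E) : Prop :=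
  F.card + ncomp src tgt F = Fintype.card V

/-- `mult(F)`: the product of the numbers of vertices of the components of `F`. -/
noncomputable def multF (src tgt : E → V) (F : Finset E) : ℕ :=
  ∏ᶠ q : Quotient (reachSetoid src tgt F),
    Nat.card {v : V // Quotient.mk (reachSetoid src tgt F) v = q}

/-- `(F, R)` is a rooted spanning forest: `R` has exactly one root in each component. -/
def IsRootedSF [Fintype V] (src tgt : E → V) (F : Finset E) (R : Finset V) : Prop :=
  IsSpForest src tgt F ∧
    ∀ v : V, ∃! u : V, u ∈ R ∧ Relation.EqvGen (Step src tgt F) u v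

/-- The polynomial `ST(G,H)(X) = Σ_{j=0}^{N} (-1)^j ST_j(G,H) X^{N-j}`, `N = |E(G)-E(H)|`. -/
noncomputable def STpoly [Fintype V] [Fintype E] [DecidableEq E] (src tgt : E → V)
    (HE : Finset E) : Polynomial ℤ :=
  ∑ j ∈ Finset.range (HEᶜ.card + 1),
    Polynomial.C ((-1 : ℤ) ^ j * (STj src tgt HE j : ℤ)) * Polynomial.X ^ (HEᶜ.card - j)

/-- The vertex map of the contraction `G/e₀`: `src e₀` is identified with `tgt e₀`. -/
def contrV [DecidableEq V] (src tgt : E → V) (e0 : E) (h : src e0 ≠ tgt e0) (v : V) :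
    {w : V // w ≠ src e0} :=
  if hv : v = src e0 then ⟨tgt e0, Ne.symm h⟩ else ⟨v, hv⟩

/-- Source of a directed edge `(e, b)` (`b = true`: the chosen direction). -/
def dsrc (src tgt : E → V) (x : E × Bool) : V := if x.2 then src x.1 else tgt x.1

/-- Target of a directed edge `(e, b)`. -/
def dtgt (src tgt : E → V) (x : E × Bool) : V := if x.2 then tgt x.1 else src x.1

/-- A non-tree edge is of type 3 when its tree path has length ≥ 2. -/
noncomputable def Type3 [Fintype E] (T0 : Finset E) (D : {e : E // e ∉ T0} → E → ℤ)
    (j : {e : E // e ∉ T0}) : Prop :=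
  2 ≤ (Finset.univ.filter fun f => D j f ≠ 0).card


section StmtEightAux

variable {V E : Type}

lemma reach_mono [DecidableEq E] {src tgt : E → V} {F F' : Finset E} (h : F ⊆ F') {a b : V}
    (hr : Reach src tgt F a b) : Reach src tgt F' a b :=
  Relation.EqvGen.mono (fun _ _ ⟨e, he, h2⟩ => ⟨e, h he, h2⟩) _ _ hr

lemma edge_reach' [DecidableEq E] {src tgt : E → V} {F : Finset E} {e : E} (he : e ∈ F) :
    Reach src tgt F (src e) (tgt e) :=
  Relation.EqvGen.rel _ _ ⟨e, he, Or.inl ⟨rfl, rfl⟩⟩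

lemma dedge_reach [DecidableEq E] {src tgt : E → V} {F : Finset E} {x : E × Bool}
    (he : x.1 ∈ F) : Reach src tgt F (dsrc src tgt x) (dtgt src tgt x) := by
  rcases x with ⟨e, b⟩
  cases b
  · exact Relation.EqvGen.rel _ _ ⟨e, he, Or.inr ⟨rfl, rfl⟩⟩
  · exact Relation.EqvGen.rel _ _ ⟨e, he, Or.inl ⟨rfl, rfl⟩⟩

lemma reach_insert_decomp [DecidableEq E] {src tgt : E → V} {F : Finset E} {e0 : E} {a b : V}
    (h : Reach src tgt (insert e0 F) a b) :
    Reach src tgt F a b ∨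
      ((Reach src tgt F a (src e0) ∨ Reach src tgt F a (tgt e0)) ∧
       (Reach src tgt F b (src e0) ∨ Reach src tgt F b (tgt e0))) := by
  induction h with
  | rel a b hab =>
    obtain ⟨e, he, hor⟩ := hab
    rcases Finset.mem_insert.mp he with rfl | heF
    · right
      rcases hor with ⟨h1, h2⟩ | ⟨h1, h2⟩
      · subst h1; subst h2
        exact ⟨Or.inl (Relation.EqvGen.refl _), Or.inr (Relation.EqvGen.refl _)⟩
      · subst h1; subst h2
        exact ⟨Or.inr (Relation.EqvGen.refl _), Or.inl (Relation.EqvGen.refl _)⟩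
    · exact Or.inl (Relation.EqvGen.rel _ _ ⟨e, heF, hor⟩)
  | refl a => exact Or.inl (Relation.EqvGen.refl _)
  | symm a b _ ih =>
    rcases ih with h | ⟨h1, h2⟩
    · exact Or.inl (Relation.EqvGen.symm _ _ h)
    · exact Or.inr ⟨h2, h1⟩
  | trans a b c _ _ ih1 ih2 =>
    rcases ih1 with h1 | ⟨ha, hb⟩
    · rcases ih2 with h2 | ⟨hb', hc⟩
      · exact Or.inl (Relation.EqvGen.trans _ _ _ h1 h2)
      · refine Or.inr ⟨?_, hc⟩
        rcases hb' with h | h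
        · exact Or.inl (Relation.EqvGen.trans _ _ _ h1 h)
        · exact Or.inr (Relation.EqvGen.trans _ _ _ h1 h)
    · rcases ih2 with h2 | ⟨hb', hc⟩
      · refine Or.inr ⟨ha, ?_⟩
        rcases hb with h | h
        · exact Or.inl (Relation.EqvGen.trans _ _ _ (Relation.EqvGen.symm _ _ h2) h)
        · exact Or.inr (Relation.EqvGen.trans _ _ _ (Relation.EqvGen.symm _ _ h2) h)
      · exact Or.inr ⟨ha, hc⟩

lemma ncomp_le_insert [Fintype V] [DecidableEq E] {src tgt : E → V} (e0 : E) (F : Finset E) :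
    ncomp src tgt F ≤ ncomp src tgt (insert e0 F) + 1 := by
  classical
  set Q1 := Quotient (reachSetoid src tgt F)
  set Q2 := Quotient (reachSetoid src tgt (insert e0 F))
  let g : Q1 → Q2 := Quotient.lift (fun v => Quotient.mk (reachSetoid src tgt (insert e0 F)) v)
    (fun a b hab => Quotient.sound (reach_mono (Finset.subset_insert e0 F) hab))
  let f : Q1 → Option Q2 := fun x =>
    if x = Quotient.mk (reachSetoid src tgt F) (src e0) then none else some (g x)
  have hginj : ∀ a b : V, g (Quotient.mk _ a) = g (Quotient.mk _ b) →
      (Quotient.mk (reachSetoid src tgt F) a ≠ Quotient.mk (reachSetoid src tgt F) (src e0)) →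
      (Quotient.mk (reachSetoid src tgt F) b ≠ Quotient.mk (reachSetoid src tgt F) (src e0)) →
      Quotient.mk (reachSetoid src tgt F) a = Quotient.mk (reachSetoid src tgt F) b := by
    intro a b hab ha hb
    have hr : Reach src tgt (insert e0 F) a b := Quotient.exact hab
    rcases reach_insert_decomp hr with h | ⟨h1, h2⟩
    · exact Quotient.sound h
    · have ha' : Reach src tgt F a (tgt e0) := by
        rcases h1 with h | h
        · exact absurd (Quotient.sound h) ha
        · exact h
      have hb' : Reach src tgt F b (tgt e0) := by
        rcases h2 with h | h
        · exact absurd (Quotient.sound h) hb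
        · exact h
      exact Quotient.sound (Relation.EqvGen.trans _ _ _ ha' (Relation.EqvGen.symm _ _ hb'))
  have hfinj : Function.Injective f := by
    intro x y hxy
    by_cases hx : x = Quotient.mk (reachSetoid src tgt F) (src e0) <;>
      by_cases hy : y = Quotient.mk (reachSetoid src tgt F) (src e0)
    · rw [hx, hy]
    · simp only [f, if_pos hx, if_neg hy] at hxy; exact absurd hxy.symm (Option.some_ne_none _)
    · simp only [f, if_pos hy, if_neg hx] at hxy; exact absurd hxy (Option.some_ne_none _)
    · simp only [f, if_neg hx, if_neg hy, Option.some.injEq] at hxy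
      induction x using Quotient.inductionOn with
      | h a =>
      induction y using Quotient.inductionOn with
      | h b => exact hginj a b hxy hx hy
  calc ncomp src tgt F ≤ Nat.card (Option Q2) := Nat.card_le_card_of_injective f hfinj
    _ = ncomp src tgt (insert e0 F) + 1 := Finite.card_option

lemma card_V_le_aux [Fintype V] [DecidableEq E] {src tgt : E → V} (F : Finset E) :
    Fintype.card V ≤ F.card + ncomp src tgt F := by
  classical
  induction F using Finset.induction_on with
  | empty =>
    simp only [Finset.card_empty, zero_add]
    have key : ∀ a b : V, Reach src tgt (∅ : Finset E) a b → a = b := by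
      intro a b h
      induction h with
      | rel a b hab => exact absurd hab.choose_spec.1 (Finset.notMem_empty _)
      | refl a => rfl
      | symm a b _ ih => exact ih.symm
      | trans a b c _ _ ih1 ih2 => exact ih1.trans ih2
    have hinj : Function.Injective (Quotient.mk (reachSetoid src tgt (∅ : Finset E))) :=
      fun a b hab => key a b (Quotient.exact hab)
    calc Fintype.card V = Nat.card V := Nat.card_eq_fintype_card.symm
      _ ≤ ncomp src tgt (∅ : Finset E) := Nat.card_le_card_of_injective _ hinj
  | @insert e0 F ha ih =>
    have h1 := ncomp_le_insert (src := src) (tgt := tgt) e0 F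
    have h2 := Finset.card_insert_of_notMem ha
    omega

lemma connected_card_le [Fintype V] [DecidableEq E] {src tgt : E → V} (F : Finset E)
    (h : ConnectedVia src tgt F) : Fintype.card V ≤ F.card + 1 := by
  have h1 := card_V_le_aux (src := src) (tgt := tgt) F
  have h2 : ncomp src tgt F ≤ 1 := by
    have hsub : Subsingleton (Quotient (reachSetoid src tgt F)) := by
      constructor
      intro x y
      induction x using Quotient.inductionOn with
      | h a =>
      induction y using Quotient.inductionOn with
      | h b => exact Quotient.sound (h a b)
    rcases isEmpty_or_nonempty (Quotient (reachSetoid src tgt F)) with hQ | hQ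
    · simp [ncomp, Nat.card_of_isEmpty]
    · exact le_of_eq (Nat.card_of_subsingleton hQ.some)
  omega

variable [Fintype V] [Fintype E] [DecidableEq V] [DecidableEq E]

lemma not_reach_erase {src tgt : E → V} {T0 : Finset E} (hT0 : IsSpanningTree src tgt T0)
    {f : E} (hf : f ∈ T0) :
    ¬ Reach src tgt (T0.erase f) (src f) (tgt f) := by
  intro h
  have hconn : ConnectedVia src tgt (T0.erase f) := by
    intro a b
    have hab := hT0.1 a b
    rw [← Finset.insert_erase hf] at hab
    rcases reach_insert_decomp hab with h' | ⟨ha, hb⟩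
    · exact h'
    · have key : ∀ x : V, (Reach src tgt (T0.erase f) x (src f) ∨
          Reach src tgt (T0.erase f) x (tgt f)) → Reach src tgt (T0.erase f) x (tgt f) := by
        rintro x (hx | hx)
        · exact Relation.EqvGen.trans _ _ _ hx h
        · exact hx
      exact Relation.EqvGen.trans _ _ _ (key a ha) (Relation.EqvGen.symm _ _ (key b hb))
  have hle := connected_card_le _ hconn
  rw [Finset.card_erase_of_mem hf] at hle
  have h1 : 1 ≤ T0.card := Finset.card_pos.mpr ⟨f, hf⟩
  have h2 := hT0.2
  omega

/-- The cut indicator potential of a tree edge. -/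
noncomputable def phi (src tgt : E → V) (T0 : Finset E) (f : E) (v : V) : ℤ :=
  if Reach src tgt (T0.erase f) v (tgt f) then 1 else 0

lemma phi_tgt {src tgt : E → V} {T0 : Finset E} (hT0 : IsSpanningTree src tgt T0)
    {f : E} (hf : f ∈ T0) : phi src tgt T0 f (tgt f) = 1 := if_pos (Relation.EqvGen.refl _)

lemma phi_src {src tgt : E → V} {T0 : Finset E} (hT0 : IsSpanningTree src tgt T0)
    {f : E} (hf : f ∈ T0) : phi src tgt T0 f (src f) = 0 := if_neg (not_reach_erase hT0 hf)

lemma phi_mem {src tgt : E → V} {T0 : Finset E} (f : E) (v : V) :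
    phi src tgt T0 f v = 0 ∨ phi src tgt T0 f v = 1 := by
  unfold phi; split_ifs <;> simp

lemma phi_eq_of_reach {src tgt : E → V} {T0 : Finset E} {f : E} {a b : V}
    (h : Reach src tgt (T0.erase f) a b) :
    phi src tgt T0 f a = phi src tgt T0 f b := by
  unfold phi
  have hiff : Reach src tgt (T0.erase f) a (tgt f) ↔ Reach src tgt (T0.erase f) b (tgt f) :=
    ⟨fun h' => Relation.EqvGen.trans _ _ _ (Relation.EqvGen.symm _ _ h) h',
     fun h' => Relation.EqvGen.trans _ _ _ h h'⟩
  rw [if_congr hiff rfl rfl]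

lemma reach_side {src tgt : E → V} {T0 : Finset E} (hT0 : IsSpanningTree src tgt T0)
    {f : E} (hf : f ∈ T0) (v : V) :
    Reach src tgt (T0.erase f) v (src f) ∨ Reach src tgt (T0.erase f) v (tgt f) := by
  have h := hT0.1 v (tgt f)
  rw [← Finset.insert_erase hf] at h
  rcases reach_insert_decomp h with h' | ⟨ha, _⟩
  · exact Or.inr h'
  · exact ha

lemma reach_of_phi_eq {src tgt : E → V} {T0 : Finset E} (hT0 : IsSpanningTree src tgt T0)
    {f : E} (hf : f ∈ T0) {a b : V}
    (h : phi src tgt T0 f a = phi src tgt T0 f b) : Reach src tgt (T0.erase f) a b := by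
  unfold phi at h
  by_cases h1 : Reach src tgt (T0.erase f) a (tgt f)
  · rw [if_pos h1] at h
    have h2 : Reach src tgt (T0.erase f) b (tgt f) := by
      by_contra h2; rw [if_neg h2] at h; exact one_ne_zero h
    exact Relation.EqvGen.trans _ _ _ h1 (Relation.EqvGen.symm _ _ h2)
  · rw [if_neg h1] at h
    have h2 : ¬ Reach src tgt (T0.erase f) b (tgt f) := by
      intro h2; rw [if_pos h2] at h; exact one_ne_zero h.symm
    have ha := (reach_side hT0 hf a).resolve_right h1
    have hb := (reach_side hT0 hf b).resolve_right h2
    exact Relation.EqvGen.trans _ _ _ ha (Relation.EqvGen.symm _ _ hb)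

lemma sum_inc {src tgt : E → V} (g : V → ℤ) (e : E) :
    ∑ v, g v * ((if tgt e = v then 1 else 0) - (if src e = v then 1 else 0))
      = g (tgt e) - g (src e) := by
  simp [mul_sub, Finset.sum_sub_distrib, mul_ite, mul_one, mul_zero, Finset.sum_ite_eq]

lemma chain_eq_sum {src tgt : E → V} {T0 : Finset E} (hT0 : IsSpanningTree src tgt T0)
    (c : E → ℤ) (hc : ∀ e, c e ≠ 0 → e ∈ T0) {f : E} (hf : f ∈ T0) :
    c f = ∑ v, phi src tgt T0 f v * bdry src tgt c v := by
  calc c f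
      = ∑ e, c e * (phi src tgt T0 f (tgt e) - phi src tgt T0 f (src e)) := by
        rw [Finset.sum_eq_single f]
        · rw [phi_tgt hT0 hf, phi_src hT0 hf]; ring
        · intro e _ hef
          by_cases hce : c e = 0
          · rw [hce]; ring
          · have heT : e ∈ T0.erase f := Finset.mem_erase.mpr ⟨hef, hc e hce⟩
            rw [phi_eq_of_reach (edge_reach' heT)]; ring
        · intro h; exact absurd (Finset.mem_univ f) h
    _ = ∑ e, ∑ v, c e * (phi src tgt T0 f v *
          ((if tgt e = v then 1 else 0) - (if src e = v then 1 else 0))) := by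
        refine Finset.sum_congr rfl fun e _ => ?_
        rw [← Finset.mul_sum, sum_inc]
    _ = ∑ v, ∑ e, c e * (phi src tgt T0 f v *
          ((if tgt e = v then 1 else 0) - (if src e = v then 1 else 0))) := Finset.sum_comm
    _ = ∑ v, phi src tgt T0 f v * bdry src tgt c v := by
        refine Finset.sum_congr rfl fun v _ => ?_
        unfold bdry
        rw [Finset.mul_sum]
        refine Finset.sum_congr rfl fun e _ => ?_
        ring

lemma D_eq {src tgt : E → V} {T0 : Finset E} (hT0 : IsSpanningTree src tgt T0)
    {D : {e : E // e ∉ T0} → E → ℤ} (hD : IsPathData src tgt T0 D)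
    (j : {e : E // e ∉ T0}) {f : E} (hf : f ∈ T0) :
    D j f = phi src tgt T0 f (src (j : E)) - phi src tgt T0 f (tgt (j : E)) := by
  have hb : ∀ v, bdry src tgt (D j) v
      = -((if tgt (j : E) = v then 1 else 0) - (if src (j : E) = v then 1 else 0)) := by
    intro v
    have h0 := congrFun (hD.2 j) v
    unfold bdry Zchain at h0
    unfold bdry
    rw [show ∀ g : E → ℤ, (∑ e, ((if e = (j : E) then (1:ℤ) else 0) + D j e) * g e)
        = (∑ e, (if e = (j : E) then (1:ℤ) else 0) * g e) + ∑ e, D j e * g e from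
        fun g => by rw [← Finset.sum_add_distrib]; exact Finset.sum_congr rfl fun e _ => by ring]
      at h0
    have h1 : (∑ e, (if e = (j : E) then (1:ℤ) else 0) *
        ((if tgt e = v then 1 else 0) - (if src e = v then 1 else 0)))
        = ((if tgt (j : E) = v then 1 else 0) - (if src (j : E) = v then 1 else 0)) := by
      rw [Finset.sum_eq_single (j : E)]
      · simp
      · intro e _ he; rw [if_neg he]; ring
      · intro h; exact absurd (Finset.mem_univ _) h
    rw [h1] at h0
    simp only [Pi.zero_apply] at h0
    linarith
  calc D j f = ∑ v, phi src tgt T0 f v * bdry src tgt (D j) v :=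
        chain_eq_sum hT0 (D j) (hD.1 j) hf
    _ = -∑ v, phi src tgt T0 f v *
          ((if tgt (j:E) = v then 1 else 0) - (if src (j:E) = v then 1 else 0)) := by
        rw [← Finset.sum_neg_distrib]
        refine Finset.sum_congr rfl fun v _ => ?_
        rw [hb v]; ring
    _ = phi src tgt T0 f (src (j : E)) - phi src tgt T0 f (tgt (j : E)) := by
        rw [sum_inc]; ring

lemma path_reach {src tgt : E → V} (F : Finset E) :
    ∀ (L : List (E × Bool)) (h : L ≠ []),
      L.Chain' (fun x y => dtgt src tgt x = dsrc src tgt y) →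
      (∀ x ∈ L, x.1 ∈ F) →
      Reach src tgt F (dsrc src tgt (L.head h)) (dtgt src tgt (L.getLast h)) := by
  intro L
  induction L with
  | nil => intro h; exact absurd rfl h
  | cons x xs ih =>
    intro h hch hF
    cases xs with
    | nil =>
      simp only [List.head_cons, List.getLast_singleton]
      exact dedge_reach (hF x (by simp))
    | cons y ys =>
      have h1 : dtgt src tgt x = dsrc src tgt y := (List.isChain_cons_cons.mp hch).1
      have h2 := ih (by simp) (List.isChain_cons_cons.mp hch).2
        (fun z hz => hF z (List.mem_cons_of_mem x hz))
      rw [List.head_cons] at h2 ⊢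
      rw [List.getLast_cons (by simp : (y :: ys) ≠ [])]
      rw [← h1] at h2
      exact Relation.EqvGen.trans _ _ _ (dedge_reach (hF x (by simp))) h2

lemma sign_arith (xs xt xu xu' ys yt yw yw' : ℤ)
    (hxs : xs = 0 ∨ xs = 1) (hxt : xt = 0 ∨ xt = 1)
    (hxu : xu = 0 ∨ xu = 1) (hxu' : xu' = 0 ∨ xu' = 1)
    (hys : ys = 0 ∨ ys = 1) (hyt : yt = 0 ∨ yt = 1)
    (hyw : yw = 0 ∨ yw = 1) (hyw' : yw' = 0 ∨ yw' = 1)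
    (hx : xs ≠ xt) (hy : ys ≠ yt) (huu : xu ≠ xu') (hww : yw ≠ yw')
    (hCs : xs = xu' → ys = yw) (hCt : xt = xu' → yt = yw) :
    (xs - xt) * (ys - yt) = (xu - xu') * (yw' - yw) := by
  rcases hxs with rfl | rfl <;> rcases hxt with rfl | rfl <;>
    rcases hxu with rfl | rfl <;> rcases hxu' with rfl | rfl <;>
    rcases hys with rfl | rfl <;> rcases hyt with rfl | rfl <;>
    rcases hyw with rfl | rfl <;> rcases hyw' with rfl | rfl <;>
    simp_all

end StmtEightAux


/-- Entries of the mesh Laplacian `Δ(G,T0) = Y·Yᵀ`: the diagonal entry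
at a tree edge `f_k` counts the non-tree edges `e` with `f_k` in the support of `D(e)`;
for `k ≠ l`, the `(f_k, f_l)` entry is `Sign(k,l)` times the number of non-tree edges `e`
with both `f_k` and `f_l` in the support of `D(e)`, where
`Sign(k,l) = ⟨f_k, γ⟩·⟨f_l, γ⟩` for `γ` the unique directed simple path in `T0` from the
edge `f_k` to the edge `f_l` (formalized as a list `L` of directed edges of `T0`,
consecutively incident, with pairwise distinct underlying edges, starting with `f_k`
and ending with `f_l`). -/
theorem stmt8 {V E : Type} [Fintype V] [Fintype E] [DecidableEq V] [DecidableEq E]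
    (src tgt : E → V) (hG : ConnectedVia src tgt Finset.univ)
    (T0 : Finset E) (hT0 : IsSpanningTree src tgt T0)
    (D : {e : E // e ∉ T0} → E → ℤ) (hD : IsPathData src tgt T0 D)
    (k l : {f : E // f ∈ T0}) (hkl : k ≠ l)
    (L : List (E × Bool)) (hne : L ≠ [])
    (hchain : L.Chain' fun x y => dtgt src tgt x = dsrc src tgt y)
    (hnodup : (L.map Prod.fst).Nodup)
    (hLT0 : ∀ x ∈ L, x.1 ∈ T0)
    (hhead : (L.head hne).1 = (k : E))
    (hlast : (L.getLast hne).1 = (l : E)) :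
    (∀ k' : {f : E // f ∈ T0},
        (Ymat T0 D * (Ymat T0 D)ᵀ) k' k'
          = (Nat.card {j : {e : E // e ∉ T0} // D j (k' : E) ≠ 0} : ℤ))
    ∧ (Ymat T0 D * (Ymat T0 D)ᵀ) k l
        = ((if (L.head hne).2 then (1 : ℤ) else -1) * (if (L.getLast hne).2 then 1 else -1))
            * (Nat.card {j : {e : E // e ∉ T0} // D j (k : E) ≠ 0 ∧ D j (l : E) ≠ 0} : ℤ) := by
  classical
  have hmul : ∀ p q : {f : E // f ∈ T0},
      (Ymat T0 D * (Ymat T0 D)ᵀ) p q = ∑ j, D j (p : E) * D j (q : E) := by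
    intro p q
    simp [Matrix.mul_apply, Ymat, Matrix.transpose_apply]
  have hDval : ∀ (j : {e : E // e ∉ T0}) (f : E), f ∈ T0 →
      D j f = 0 ∨ D j f = 1 ∨ D j f = -1 := by
    intro j f hf
    rw [D_eq hT0 hD j hf]
    rcases phi_mem (src := src) (tgt := tgt) (T0 := T0) f (src (j : E)) with h1 | h1 <;>
      rcases phi_mem (src := src) (tgt := tgt) (T0 := T0) f (tgt (j : E)) with h2 | h2 <;>
      omega
  constructor
  · intro k'
    rw [hmul]
    have hterm : ∀ j : {e : E // e ∉ T0}, D j (k' : E) * D j (k' : E)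
        = if D j (k' : E) ≠ 0 then 1 else 0 := by
      intro j
      rcases hDval j _ k'.2 with h | h | h <;> simp [h]
    rw [Finset.sum_congr rfl fun j _ => hterm j, Finset.sum_boole]
    have hc : Nat.card {j : {e : E // e ∉ T0} // D j (k' : E) ≠ 0}
        = (Finset.univ.filter fun j : {e : E // e ∉ T0} => D j (k' : E) ≠ 0).card := by
      rw [Nat.card_eq_fintype_card, Fintype.card_subtype]
    rw [hc]
  · -- off-diagonal entry
    obtain ⟨a, T, rfl⟩ : ∃ a T, L = a :: T := by
      cases L with
      | nil => exact absurd rfl hne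
      | cons a T => exact ⟨a, T, rfl⟩
    have hkl' : (k : E) ≠ (l : E) := fun h => hkl (Subtype.ext h)
    have hT : T ≠ [] := by
      rintro rfl
      exact hkl' (hhead.symm.trans hlast)
    obtain ⟨b, M, rfl⟩ : ∃ b M, T = M ++ [b] :=
      ⟨T.getLast hT, T.dropLast, (List.dropLast_append_getLast hT).symm⟩
    have hassoc : a :: (M ++ [b]) = (a :: M) ++ [b] := rfl
    have hlastL : ((a :: (M ++ [b])).getLast hne) = b :=
      List.getLast_append_singleton (a :: M)
    have ha1 : a.1 = (k : E) := hhead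
    have hb1 : b.1 = (l : E) := by rw [← hlastL]; exact hlast
    -- nodup consequences
    have hnodup' := hnodup
    rw [List.map_cons, List.nodup_cons] at hnodup'
    obtain ⟨hanotin, hrest⟩ := hnodup'
    have hbnotin : b.1 ∉ M.map Prod.fst := by
      rw [List.map_append] at hrest
      intro hmem
      exact (List.disjoint_of_nodup_append hrest) hmem (by simp)
    -- edge membership for the two sub-paths
    have hedgesT : ∀ x ∈ M ++ [b], x.1 ∈ T0.erase (k : E) := by
      intro x hx
      refine Finset.mem_erase.mpr ⟨?_, hLT0 x (List.mem_cons_of_mem a hx)⟩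
      intro hxk
      apply hanotin
      have hax : a.1 = x.1 := by rw [ha1, hxk]
      rw [hax]
      exact List.mem_map_of_mem (f := Prod.fst) hx
    have hedgesAM : ∀ x ∈ a :: M, x.1 ∈ T0.erase (l : E) := by
      intro x hx
      refine Finset.mem_erase.mpr ⟨?_, hLT0 x (by rw [hassoc]; exact List.mem_append_left _ hx)⟩
      intro hxl
      rcases List.mem_cons.mp hx with heq | hxM
      · apply hanotin
        have hax : a.1 = ↑l := by rw [← heq]; exact hxl
        have hab : a.1 = b.1 := hax.trans hb1.symm
        rw [hab]
        simp
      · apply hbnotin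
        have hbx : b.1 = x.1 := hb1.trans hxl.symm
        rw [hbx]
        exact List.mem_map_of_mem (f := Prod.fst) hxM
    -- chain decompositions
    have hchT : (M ++ [b]).Chain' (fun x y => dtgt src tgt x = dsrc src tgt y) :=
      (List.isChain_cons.mp hchain).2
    have hlinkhead : dtgt src tgt a = dsrc src tgt ((M ++ [b]).head (by simp)) := by
      exact (List.isChain_cons.mp hchain).1 _ (List.head?_eq_head _)
    have hchAM : (a :: M).Chain' (fun x y => dtgt src tgt x = dsrc src tgt y) := by
      rw [hassoc] at hchain
      exact (List.isChain_append.mp hchain).1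
    have hlink' : dtgt src tgt ((a :: M).getLast (by simp)) = dsrc src tgt b := by
      rw [hassoc] at hchain
      exact (List.isChain_append.mp hchain).2.2 _ (List.getLast?_eq_getLast _) _ rfl
    -- the two connection facts
    have F1 : Reach src tgt (T0.erase (k : E)) (dtgt src tgt a) (dtgt src tgt b) := by
      have hp := path_reach (T0.erase (k : E)) (M ++ [b]) (by simp) hchT hedgesT
      rw [← hlinkhead] at hp
      rwa [show (M ++ [b]).getLast (by simp) = b from List.getLast_append_singleton M] at hp
    have F2 : Reach src tgt (T0.erase (l : E)) (dsrc src tgt a) (dsrc src tgt b) := by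
      have hp := path_reach (T0.erase (l : E)) (a :: M) (by simp) hchAM hedgesAM
      rw [List.head_cons, hlink'] at hp
      exact hp
    -- phi values at the path's extreme edges
    have hKdiff : phi src tgt T0 (k : E) (dtgt src tgt a)
        - phi src tgt T0 (k : E) (dsrc src tgt a) = (if a.2 then (1 : ℤ) else -1) := by
      cases ha2 : a.2 <;>
        simp [dsrc, dtgt, ha2, ha1, phi_tgt hT0 k.2, phi_src hT0 k.2]
    have hLdiff : phi src tgt T0 (l : E) (dtgt src tgt b)
        - phi src tgt T0 (l : E) (dsrc src tgt b) = (if b.2 then (1 : ℤ) else -1) := by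
      cases hb2 : b.2 <;>
        simp [dsrc, dtgt, hb2, hb1, phi_tgt hT0 l.2, phi_src hT0 l.2]
    have hKne : phi src tgt T0 (k : E) (dtgt src tgt a)
        ≠ phi src tgt T0 (k : E) (dsrc src tgt a) := by
      intro h
      rw [h, sub_self] at hKdiff
      split_ifs at hKdiff <;> omega
    have hLne : phi src tgt T0 (l : E) (dsrc src tgt b)
        ≠ phi src tgt T0 (l : E) (dtgt src tgt b) := by
      intro h
      rw [h, sub_self] at hLdiff
      split_ifs at hLdiff <;> omega
    have hKw' : phi src tgt T0 (k : E) (dtgt src tgt b)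
        = phi src tgt T0 (k : E) (dtgt src tgt a) := (phi_eq_of_reach F1).symm
    have hKw : phi src tgt T0 (k : E) (dsrc src tgt b)
        = phi src tgt T0 (k : E) (dtgt src tgt a) := by
      rw [← hKw']
      exact phi_eq_of_reach (dedge_reach (hedgesT b (by simp)))
    have hLu' : phi src tgt T0 (l : E) (dsrc src tgt a)
        = phi src tgt T0 (l : E) (dsrc src tgt b) := phi_eq_of_reach F2
    have claimC : ∀ v : V, phi src tgt T0 (k : E) v = phi src tgt T0 (k : E) (dsrc src tgt a) →
        phi src tgt T0 (l : E) v = phi src tgt T0 (l : E) (dsrc src tgt b) := by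
      intro v hv
      have h1 : Reach src tgt (T0.erase (k : E)) v (dsrc src tgt a) :=
        reach_of_phi_eq hT0 k.2 hv
      have hlmem : (l : E) ∈ T0.erase (k : E) :=
        Finset.mem_erase.mpr ⟨fun h => hkl' h.symm, l.2⟩
      rw [← Finset.insert_erase hlmem] at h1
      rcases reach_insert_decomp h1 with h2 | ⟨_, hu2⟩
      · have h3 : Reach src tgt (T0.erase (l : E)) v (dsrc src tgt a) := by
          refine reach_mono ?_ h2
          rw [Finset.erase_right_comm]
          exact Finset.erase_subset _ _
        rw [phi_eq_of_reach h3, hLu']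
      · exfalso
        have hsub : (T0.erase (k : E)).erase (l : E) ⊆ T0.erase (k : E) :=
          Finset.erase_subset _ _
        have hKsrc : phi src tgt T0 (k : E) (src (l : E))
            = phi src tgt T0 (k : E) (dtgt src tgt a) := by
          cases hb2 : b.2
          · rw [show src (l : E) = dtgt src tgt b by simp [dtgt, hb2, hb1]]
            exact hKw'
          · rw [show src (l : E) = dsrc src tgt b by simp [dsrc, hb2, hb1]]
            exact hKw
        have hKtgt : phi src tgt T0 (k : E) (tgt (l : E))
            = phi src tgt T0 (k : E) (dtgt src tgt a) := by
          cases hb2 : b.2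
          · rw [show tgt (l : E) = dsrc src tgt b by simp [dsrc, hb2, hb1]]
            exact hKw
          · rw [show tgt (l : E) = dtgt src tgt b by simp [dtgt, hb2, hb1]]
            exact hKw'
        apply hKne
        rcases hu2 with h | h
        · have h4 := phi_eq_of_reach (reach_mono hsub h)
          rw [hKsrc] at h4
          exact h4.symm
        · have h4 := phi_eq_of_reach (reach_mono hsub h)
          rw [hKtgt] at h4
          exact h4.symm
    -- per-edge sign computation, then sum
    rw [hmul]
    have hterm : ∀ j : {e : E // e ∉ T0}, D j (k : E) * D j (l : E)
        = if (D j (k : E) ≠ 0 ∧ D j (l : E) ≠ 0)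
            then ((if a.2 then (1 : ℤ) else -1) * (if b.2 then 1 else -1)) else 0 := by
      intro j
      by_cases h1 : D j (k : E) = 0
      · simp [h1]
      by_cases h2 : D j (l : E) = 0
      · simp [h2]
      rw [if_pos ⟨h1, h2⟩, ← hKdiff, ← hLdiff]
      have hx : phi src tgt T0 (k : E) (src (j : E)) ≠ phi src tgt T0 (k : E) (tgt (j : E)) := by
        intro h
        exact h1 (by rw [D_eq hT0 hD j k.2]; omega)
      have hy : phi src tgt T0 (l : E) (src (j : E)) ≠ phi src tgt T0 (l : E) (tgt (j : E)) := by
        intro h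
        exact h2 (by rw [D_eq hT0 hD j l.2]; omega)
      rw [D_eq hT0 hD j k.2, D_eq hT0 hD j l.2]
      exact sign_arith _ _ _ _ _ _ _ _
        (phi_mem _ _) (phi_mem _ _) (phi_mem _ _) (phi_mem _ _)
        (phi_mem _ _) (phi_mem _ _) (phi_mem _ _) (phi_mem _ _)
        hx hy hKne hLne (claimC _) (claimC _)
    rw [Finset.sum_congr rfl fun j _ => hterm j]
    rw [Finset.sum_ite, Finset.sum_const, Finset.sum_const_zero, add_zero, nsmul_eq_mul]
    rw [hlastL, List.head_cons]
    have hc : Nat.card {j : {e : E // e ∉ T0} // D j (k : E) ≠ 0 ∧ D j (l : E) ≠ 0}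
        = (Finset.univ.filter fun j : {e : E // e ∉ T0} =>
            D j (k : E) ≠ 0 ∧ D j (l : E) ≠ 0).card := by
      rw [Nat.card_eq_fintype_card, Fintype.card_subtype]
    rw [hc]
    push_cast
    ring

end Mesh
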